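/- Define the D-GMSR conjunction key function h∧(y) := (M_{0,w}^ε(|y|_+^2))^{1/2} − (M_{p,w}^ε(|y|_-^2))^{1/2}. Then h∧(y) > 0 if and only if min_i y_i > 0, i.e., all components of y are strictly positive. -/
import Mathlib


open Finset Real Filter Topology

noncomputable def M0 {n : ℕ} (ε : ℝ) (w : Fin n → ℕ) (z : Fin n → ℝ) : ℝ :=
  (ε ^ (∑ i, w i) + ∏ i, z i ^ w i) ^ ((1 : ℝ) / (∑ i, w i))

noncomputable def Mp {n : ℕ} (ε : ℝ) (p : ℕ) (w : Fin n → ℕ) (z : Fin n → ℝ) : ℝ :=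
  (ε ^ p + (1 / (∑ i, (w i : ℝ))) * ∑ i, (w i : ℝ) * z i ^ p) ^ ((1 : ℝ) / p)

noncomputable def posSq {n : ℕ} (y : Fin n → ℝ) : Fin n → ℝ := fun i => max (y i) 0 ^ 2

noncomputable def negSq {n : ℕ} (y : Fin n → ℝ) : Fin n → ℝ := fun i => min (y i) 0 ^ 2

noncomputable def hConj {n : ℕ} (ε : ℝ) (p : ℕ) (w : Fin n → ℕ) (y : Fin n → ℝ) : ℝ :=
  M0 ε w (posSq y) ^ ((1 : ℝ) / 2) - Mp ε p w (negSq y) ^ ((1 : ℝ) / 2)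

noncomputable def hDisj {n : ℕ} (ε : ℝ) (p : ℕ) (w : Fin n → ℕ) (y : Fin n → ℝ) : ℝ :=
  - hConj ε p w (fun i => - y i)

lemma pow_one_div_cancel (a : ℝ) (ha : 0 ≤ a) (m : ℕ) (hm : m ≠ 0) :
    (a ^ m) ^ ((1:ℝ)/m) = a := by
  rw [one_div, Real.pow_rpow_inv_natCast ha hm]

theorem hConj_pos_iff_min_pos {n : ℕ} (hn : 0 < n) (ε : ℝ) (hε : 0 < ε)
    (p : ℕ) (hp : 0 < p) (w : Fin n → ℕ) (hw : ∀ i, 0 < w i) (y : Fin n → ℝ) :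
    0 < hConj ε p w y ↔
      0 < Finset.univ.inf' (Finset.univ_nonempty_iff.mpr ⟨⟨0, hn⟩⟩) y := by
  have hS : 0 < ∑ i, w i :=
    Finset.sum_pos (fun i _ => hw i) ⟨⟨0, hn⟩, Finset.mem_univ _⟩
  rw [Finset.lt_inf'_iff]
  simp only [Finset.mem_univ, true_implies]
  constructor
  · intro h
    by_contra hc
    push_neg at hc
    obtain ⟨j, hj⟩ := hc
    have hM0 : M0 ε w (posSq y) = ε := by
      unfold M0
      have hprod : ∏ i, posSq y i ^ w i = 0 := by
        apply Finset.prod_eq_zero (Finset.mem_univ j)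
        have hpj : posSq y j = 0 := by
          simp [posSq, max_eq_right hj]
        rw [hpj, zero_pow (hw j).ne']
      rw [hprod, add_zero]
      exact pow_one_div_cancel ε hε.le _ hS.ne'
    have hMp : ε ≤ Mp ε p w (negSq y) := by
      unfold Mp
      have hnn : 0 ≤ (1 / (∑ i, (w i : ℝ))) * ∑ i, (w i : ℝ) * negSq y i ^ p := by
        apply mul_nonneg
        · positivity
        · apply Finset.sum_nonneg; intro i _
          apply mul_nonneg (by positivity)
          apply pow_nonneg
          simp only [negSq]
          positivity
      have h1 : (ε:ℝ)^p ≤ ε^p + (1 / (∑ i, (w i : ℝ))) * ∑ i, (w i : ℝ) * negSq y i ^ p := by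
        linarith
      calc ε = (ε^p) ^ ((1:ℝ)/p) := (pow_one_div_cancel ε hε.le p hp.ne').symm
        _ ≤ _ := Real.rpow_le_rpow (by positivity) h1 (by positivity)
    have hle : hConj ε p w y ≤ 0 := by
      unfold hConj
      rw [hM0]
      have := Real.rpow_le_rpow hε.le hMp (by norm_num : (0:ℝ) ≤ 1/2)
      linarith
    linarith
  · intro h
    have hneg : ∀ i, negSq y i = 0 := fun i => by
      simp [negSq, min_eq_right (h i).le]
    have hMp : Mp ε p w (negSq y) = ε := by
      unfold Mp
      have hz : ∑ i, (w i : ℝ) * negSq y i ^ p = 0 := by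
        apply Finset.sum_eq_zero; intro i _
        rw [hneg i, zero_pow hp.ne', mul_zero]
      rw [hz, mul_zero, add_zero]
      exact pow_one_div_cancel ε hε.le p hp.ne'
    have hM0 : ε < M0 ε w (posSq y) := by
      unfold M0
      have hP : 0 < ∏ i, posSq y i ^ w i := by
        apply Finset.prod_pos; intro i _
        apply pow_pos
        have : max (y i) 0 = y i := max_eq_left (h i).le
        simp only [posSq, this]
        exact pow_pos (h i) 2
      have hexp : (0:ℝ) < (1:ℝ) / (∑ i, w i) := by
        apply one_div_pos.mpr
        exact_mod_cast hS
      calc ε = (ε ^ (∑ i, w i)) ^ ((1:ℝ)/(∑ i, w i)) :=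
            (pow_one_div_cancel ε hε.le _ hS.ne').symm
        _ < _ := Real.rpow_lt_rpow (by positivity) (by linarith) hexp
    unfold hConj
    rw [hMp]
    have := Real.rpow_lt_rpow hε.le hM0 (by norm_num : (0:ℝ) < 1/2)
    linarith
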